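/- Suppose M*, Y* ∈ S^n are positive semidefinite with rank(M*) = n−k, rank(Y*) = k, and ⟨M*, Y*⟩ = 0. Let W ⊆ ℝ^n be an (n−k)-dimensional subspace. Then the restriction M*_W of M* to W is positive definite if and only if the restriction Y*_{W⊥} of Y* to W⊥ is positive definite. -/

import Mathlib

open Matrix

/-- The quadratic form of a matrix, `vᵀ M v`, evaluated on a Euclidean vector. -/
noncomputable def quadForm {n : ℕ} (M : Matrix (Fin n) (Fin n) ℝ)
    (v : EuclideanSpace ℝ (Fin n)) : ℝ :=
  dotProduct (WithLp.equiv 2 (Fin n → ℝ) v) (M *ᵥ (WithLp.equiv 2 (Fin n → ℝ) v))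

open Module

lemma aux_trace_zero {m p : Type*} [Fintype m] [Fintype p] (D : Matrix m p ℝ)
    (h : Matrix.trace (Dᴴ * D) = 0) : D = 0 := by
  ext i j
  have key : ∀ jj ∈ Finset.univ (α := p), (fun jj => ∑ ii, D ii jj * D ii jj) jj = 0 := by
    refine (Finset.sum_eq_zero_iff_of_nonneg ?_).mp ?_
    · intro jj _; exact Finset.sum_nonneg fun ii _ => mul_self_nonneg _
    · simpa [Matrix.trace, Matrix.diag, Matrix.mul_apply, Matrix.conjTranspose_apply] using h
  have key2 := (Finset.sum_eq_zero_iff_of_nonneg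
    (fun ii _ => mul_self_nonneg (D ii j))).mp (key j (Finset.mem_univ j)) i (Finset.mem_univ i)
  simpa [mul_self_eq_zero] using key2

lemma aux_YM {n : ℕ} (M Y : Matrix (Fin n) (Fin n) ℝ)
    (hM : M.PosSemidef) (hY : Y.PosSemidef)
    (hMY : Matrix.trace (M * Y) = 0) : Y * M = 0 := by
  obtain ⟨B, hB⟩ : ∃ B : Matrix (Fin n) (Fin n) ℝ, M = Bᴴ * B := by
    open scoped MatrixOrder in exact CStarAlgebra.nonneg_iff_eq_star_mul_self.mp hM.nonneg
  obtain ⟨C, hC⟩ : ∃ C : Matrix (Fin n) (Fin n) ℝ, Y = Cᴴ * C := by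
    open scoped MatrixOrder in exact CStarAlgebra.nonneg_iff_eq_star_mul_self.mp hY.nonneg
  have htr : Matrix.trace ((C * Bᴴ)ᴴ * (C * Bᴴ)) = 0 := by
    rw [conjTranspose_mul, conjTranspose_conjTranspose]
    calc Matrix.trace (B * Cᴴ * (C * Bᴴ))
        = Matrix.trace (B * Cᴴ * C * Bᴴ) := by rw [Matrix.mul_assoc (B * Cᴴ)]
      _ = Matrix.trace (Bᴴ * (B * Cᴴ * C)) := by rw [Matrix.trace_mul_comm]
      _ = Matrix.trace (M * Y) := by
          rw [hB, hC, Matrix.mul_assoc Bᴴ B (Cᴴ * C), ← Matrix.mul_assoc B Cᴴ C]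
      _ = 0 := hMY
  have hD : C * Bᴴ = 0 := aux_trace_zero _ htr
  calc Y * M = Cᴴ * (C * Bᴴ) * B := by
        rw [hB, hC, Matrix.mul_assoc Cᴴ C (Bᴴ * B), ← Matrix.mul_assoc C Bᴴ B,
          ← Matrix.mul_assoc Cᴴ (C * Bᴴ) B]
    _ = 0 := by rw [hD]; simp


lemma aux_ker_iff {n : ℕ} (M : Matrix (Fin n) (Fin n) ℝ) (v : EuclideanSpace ℝ (Fin n)) :
    Matrix.toEuclideanLin M v = 0 ↔ M *ᵥ (WithLp.equiv 2 (Fin n → ℝ) v) = 0 := by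
  rw [Matrix.toEuclideanLin_apply]
  constructor
  · intro h; simpa using congrArg (WithLp.equiv 2 (Fin n → ℝ)) h
  · intro h; have h' : M *ᵥ v.ofLp = 0 := h; rw [h']; simp

lemma aux_posdef_iff {n : ℕ} (M : Matrix (Fin n) (Fin n) ℝ) (hM : M.PosSemidef)
    (U : Submodule ℝ (EuclideanSpace ℝ (Fin n))) :
    (∀ v ∈ U, v ≠ 0 → 0 < quadForm M v) ↔
      Disjoint U (LinearMap.ker (Matrix.toEuclideanLin M)) := by
  constructor
  · intro hpos
    rw [Submodule.disjoint_def]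
    intro v hvU hvK
    by_contra hv0
    have h1 := hpos v hvU hv0
    have h2 : M *ᵥ (WithLp.equiv 2 (Fin n → ℝ) v) = 0 :=
      (aux_ker_iff M v).mp (LinearMap.mem_ker.mp hvK)
    rw [quadForm, h2, dotProduct_zero] at h1
    exact lt_irrefl 0 h1
  · intro hdis v hvU hv0
    set x := WithLp.equiv 2 (Fin n → ℝ) v with hx
    have hnn : 0 ≤ quadForm M v := by
      have := hM.dotProduct_mulVec_nonneg x
      simpa [quadForm, star_trivial, hx] using this
    rcases hnn.lt_or_eq with h | h
    · exact h
    · exfalso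
      have hz : dotProduct (star x) (M *ᵥ x) = 0 := by
        simpa [quadForm, star_trivial, hx] using h.symm
      have hMv : M *ᵥ x = 0 := (hM.dotProduct_mulVec_zero_iff x).mp hz
      have hvK : v ∈ LinearMap.ker (Matrix.toEuclideanLin M) :=
        LinearMap.mem_ker.mpr ((aux_ker_iff M v).mpr hMv)
      exact hv0 (Submodule.disjoint_def.mp hdis v hvU hvK)

lemma aux_disj_fwd {E : Type*} [NormedAddCommGroup E] [InnerProductSpace ℝ E]
    [FiniteDimensional ℝ E] (U K : Submodule ℝ E)
    (h : finrank ℝ U + finrank ℝ K = finrank ℝ E) (hd : Disjoint U K) :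
    Disjoint Uᗮ Kᗮ := by
  have hsup : U ⊔ K = ⊤ := by
    apply Submodule.eq_top_of_finrank_eq
    have h2 := Submodule.finrank_sup_add_finrank_inf_eq U K
    rw [disjoint_iff.mp hd] at h2
    simp only [finrank_bot, add_zero] at h2
    rw [h2]; exact h
  rw [disjoint_iff, Submodule.inf_orthogonal, hsup, Submodule.top_orthogonal_eq_bot]

/-- for PSD matrices `M*, Y*` with complementary ranks `n-k` and `k`
and `⟨M*,Y*⟩ = 0`, and an `(n-k)`-dimensional subspace `W`, the compression of `M*`
to `W` is positive definite iff the compression of `Y*` to `Wᗮ` is positive definite. -/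
theorem stmt_1 {n k : ℕ} (hk : k ≤ n) (M Y : Matrix (Fin n) (Fin n) ℝ)
    (hM : M.PosSemidef) (hY : Y.PosSemidef)
    (hrM : M.rank = n - k) (hrY : Y.rank = k)
    (hMY : Matrix.trace (M * Y) = 0)
    (W : Submodule ℝ (EuclideanSpace ℝ (Fin n)))
    (hW : Module.finrank ℝ W = n - k) :
    (∀ v ∈ W, v ≠ 0 → 0 < quadForm M v) ↔ (∀ v ∈ Wᗮ, v ≠ 0 → 0 < quadForm Y v) := by
  set T := Matrix.toEuclideanLin M with hT
  set S := Matrix.toEuclideanLin Y with hS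
  have hE : finrank ℝ (EuclideanSpace ℝ (Fin n)) = n := finrank_euclideanSpace_fin
  -- ranks of ranges
  have hrangeT : finrank ℝ (LinearMap.range T) = n - k := by
    rw [hT, Matrix.toEuclideanLin_eq_toLin, ← Matrix.rank_eq_finrank_range_toLin, hrM]
  have hrangeS : finrank ℝ (LinearMap.range S) = k := by
    rw [hS, Matrix.toEuclideanLin_eq_toLin, ← Matrix.rank_eq_finrank_range_toLin, hrY]
  have hrnT := LinearMap.finrank_range_add_finrank_ker T
  have hrnS := LinearMap.finrank_range_add_finrank_ker S
  rw [hE, hrangeT] at hrnT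
  rw [hE, hrangeS] at hrnS
  have hkerT : finrank ℝ (LinearMap.ker T) = k := by omega
  have hkerS : finrank ℝ (LinearMap.ker S) = n - k := by omega
  -- Y * M = 0 : range T ≤ ker S
  have hYM : Y * M = 0 := aux_YM M Y hM hY hMY
  have hsub : LinearMap.range T ≤ LinearMap.ker S := by
    rintro u ⟨w, rfl⟩
    rw [LinearMap.mem_ker, hS, hT]
    rw [aux_ker_iff]
    have : (WithLp.equiv 2 (Fin n → ℝ)) (Matrix.toEuclideanLin M w)
        = M *ᵥ (WithLp.equiv 2 (Fin n → ℝ)) w := rfl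
    rw [this, Matrix.mulVec_mulVec, hYM, Matrix.zero_mulVec]
  have hrange_eq : LinearMap.range T = LinearMap.ker S :=
    Submodule.eq_of_le_of_finrank_eq hsub (by rw [hrangeT, hkerS])
  -- range T = (ker T)ᗮ using symmetry of T
  have hsym : LinearMap.IsSymmetric T := Matrix.isHermitian_iff_isSymmetric.mp hM.1
  have horth : (LinearMap.range T)ᗮ = LinearMap.ker T := by
    ext v
    simp only [Submodule.mem_orthogonal, LinearMap.mem_ker]
    constructor
    · intro h
      have h2 : ∀ w, inner ℝ (T w) v = (0 : ℝ) := fun w => h (T w) ⟨w, rfl⟩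
      have h3 : inner ℝ (T v) (T v) = (0 : ℝ) := by
        rw [hsym v (T v), real_inner_comm]; exact h2 (T v)
      exact inner_self_eq_zero.mp h3
    · rintro h u ⟨w, rfl⟩
      rw [real_inner_comm, ← hsym v w, h, inner_zero_left]
  have hkerS_eq : LinearMap.ker S = (LinearMap.ker T)ᗮ := by
    rw [← hrange_eq, ← horth, Submodule.orthogonal_orthogonal]
  -- reduce to disjointness
  rw [aux_posdef_iff M hM W, aux_posdef_iff Y hY Wᗮ, ← hT, ← hS, hkerS_eq]
  have hdim : finrank ℝ W + finrank ℝ (LinearMap.ker T) = finrank ℝ (EuclideanSpace ℝ (Fin n)) := by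
    rw [hW, hkerT, hE]; omega
  constructor
  · exact aux_disj_fwd W (LinearMap.ker T) hdim
  · intro hd
    have hdim2 : finrank ℝ Wᗮ + finrank ℝ (LinearMap.ker T)ᗮ
        = finrank ℝ (EuclideanSpace ℝ (Fin n)) := by
      have h1 := Submodule.finrank_add_finrank_orthogonal (K := W)
      have h2 := Submodule.finrank_add_finrank_orthogonal (K := LinearMap.ker T)
      omega
    have := aux_disj_fwd Wᗮ (LinearMap.ker T)ᗮ hdim2 hd
    rwa [Submodule.orthogonal_orthogonal, Submodule.orthogonal_orthogonal] at this
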